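/- Let a < b, let L ≥ 0, and let f : [a,b] → ℝ be L-Lipschitz. Let a = t_0 < t_1 < ⋯ < t_n = b be a partition with mesh max_i (t_{i+1} − t_i) ≤ δ, and write Δ_i = |f(t_{i+1}) − f(t_i)|. Then Σ_{i=0}^{n−1} Δ_i − Σ_{i=0}^{n−1} log(1 + Δ_i) ≤ (L²δ/2)·(b − a). In particular, the value of the log(1+·) partition sum over an δ-mesh partition is at most L²δ(b−a) smaller (up to the constant 1/2) than the corresponding total-variation partition sum. -/

import Mathlib

lemma log_one_add_lower (x : ℝ) (hx : 0 ≤ x) :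
    x - Real.log (1 + x) ≤ x ^ 2 / 2 := by
  set g : ℝ → ℝ := fun y => Real.log (1 + y) - y + y ^ 2 / 2 with hg
  have hmono : MonotoneOn g (Set.Ici (0 : ℝ)) := by
    apply monotoneOn_of_deriv_nonneg (convex_Ici 0)
    · apply ContinuousOn.add
      · apply ContinuousOn.sub
        · apply ContinuousOn.log (by fun_prop)
          intro y hy
          simp only [Set.mem_Ici] at hy; linarith
        · fun_prop
      · fun_prop
    · rw [interior_Ici]
      intro y hy
      simp only [Set.mem_Ioi] at hy
      have h1 : (1 : ℝ) + y ≠ 0 := by linarith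
      apply DifferentiableWithinAt.add
      apply DifferentiableWithinAt.sub
      · exact (((differentiable_id.const_add 1) y).log h1).differentiableWithinAt
      · exact differentiableWithinAt_id
      · exact ((differentiable_pow 2 y).div_const 2).differentiableWithinAt
    · intro y hy
      rw [interior_Ici] at hy
      simp only [Set.mem_Ioi] at hy
      have h1 : (1 : ℝ) + y ≠ 0 := by linarith
      have hd : HasDerivAt g (1 / (1 + y) - 1 + y) y := by
        have h2 : HasDerivAt (fun y : ℝ => 1 + y) 1 y :=
          (hasDerivAt_id y).const_add 1
        have h3 : HasDerivAt (fun y : ℝ => Real.log (1 + y)) (1 / (1 + y)) y := by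
          simpa using (h2.log h1)
        have h4 : HasDerivAt (fun y : ℝ => y ^ 2 / 2) y y := by
          have := (hasDerivAt_pow 2 y).div_const 2
          simpa using this
        exact (h3.sub (hasDerivAt_id y)).add h4
      rw [hd.deriv]
      have : 1 / (1 + y) - 1 + y = y ^ 2 / (1 + y) := by
        field_simp; ring
      rw [this]
      positivity
  have := hmono (Set.self_mem_Ici) (Set.mem_Ici.mpr hx) hx
  simp only [hg, Real.log_one, add_zero] at this
  norm_num at this
  linarith

theorem tv_sub_logsum_le_of_lipschitz (a b L δ : ℝ) (hab : a < b) (hL : 0 ≤ L)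
    (hδ : 0 ≤ δ) (f : ℝ → ℝ)
    (hf : ∀ x ∈ Set.Icc a b, ∀ y ∈ Set.Icc a b, |f x - f y| ≤ L * |x - y|)
    (n : ℕ) (t : ℕ → ℝ) (hn : 0 < n) (ht0 : t 0 = a) (htn : t n = b)
    (hmono : ∀ i < n, t i < t (i + 1))
    (hmesh : ∀ i < n, t (i + 1) - t i ≤ δ) :
    (∑ i ∈ Finset.range n, |f (t (i + 1)) - f (t i)|) -
        (∑ i ∈ Finset.range n, Real.log (1 + |f (t (i + 1)) - f (t i)|)) ≤
      (L ^ 2 * δ / 2) * (b - a) := by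
  -- monotonicity of t on [0, n]
  have hmono' : ∀ i j : ℕ, i ≤ j → j ≤ n → t i ≤ t j := by
    intro i j hij hjn
    induction j with
    | zero => simp_all
    | succ k ih =>
      rcases Nat.lt_or_ge i (k+1) with h | h
      · have hk : i ≤ k := Nat.lt_succ_iff.mp h
        have := ih hk (Nat.le_of_succ_le hjn)
        have := le_of_lt (hmono k (Nat.lt_of_succ_le hjn))
        linarith
      · have : i = k + 1 := le_antisymm hij h
        simp [this]
  have hmem : ∀ i ≤ n, t i ∈ Set.Icc a b := by
    intro i hi
    constructor
    · rw [← ht0]; exact hmono' 0 i (Nat.zero_le _) hi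
    · rw [← htn]; exact hmono' i n hi le_rfl
  -- pointwise bound
  rw [← Finset.sum_sub_distrib]
  have key : ∀ i ∈ Finset.range n,
      |f (t (i + 1)) - f (t i)| - Real.log (1 + |f (t (i + 1)) - f (t i)|)
        ≤ (L ^ 2 * δ / 2) * (t (i + 1) - t i) := by
    intro i hi
    rw [Finset.mem_range] at hi
    set Δ := |f (t (i + 1)) - f (t i)| with hΔ
    have hΔ0 : 0 ≤ Δ := abs_nonneg _
    have hti : t (i+1) - t i > 0 := sub_pos.mpr (hmono i hi)
    have hlip : Δ ≤ L * (t (i + 1) - t i) := by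
      have := hf (t (i+1)) (hmem _ hi) (t i) (hmem _ (le_of_lt hi))
      rwa [abs_of_pos hti] at this
    have h1 : Δ - Real.log (1 + Δ) ≤ Δ ^ 2 / 2 := log_one_add_lower Δ hΔ0
    have h2 : Δ ^ 2 / 2 ≤ (L ^ 2 * δ / 2) * (t (i + 1) - t i) := by
      have hm := hmesh i hi
      have : Δ ^ 2 ≤ (L * (t (i+1) - t i)) * (L * δ) := by
        calc Δ ^ 2 = Δ * Δ := sq Δ
        _ ≤ (L * (t (i+1) - t i)) * (L * δ) := by
            apply mul_le_mul hlip (hlip.trans ?_) hΔ0 (by positivity)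
            exact mul_le_mul_of_nonneg_left hm hL
      nlinarith
    linarith
  calc _ ≤ ∑ i ∈ Finset.range n, (L ^ 2 * δ / 2) * (t (i + 1) - t i) :=
        Finset.sum_le_sum key
    _ = (L ^ 2 * δ / 2) * (b - a) := by
        rw [← Finset.mul_sum, Finset.sum_range_sub, ht0, htn]
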